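/- Let H be a Banach space, T ≥ 2, T₁ ∈ (0,T), and let V : [0,∞) → ℒ(H), S ∈ ℒ(H), ψ ∈ ℒ(H) be such that S = ψS = Sψ, ‖ψV(t)ψ‖ ≤ C₀/((t+1)·ln²(t+e)) for all t ≥ 0, and ‖S‖ ≤ M. Define recursively B⁰₁ = S and operators by: U(NT) ψ := V(NT)ψ + ∑_{k=0}^{N-1} V(kT + T - T₁) B_N^k where B_{N+1}^k = B_N^{k-1} for 1 ≤ k ≤ N and B⁰_{N+1} = ∑_{k=0}^{N-1} Sψ V(kT+T-T₁)ψ B_N^k + SψV(NT)ψ. Then if each B_N^k satisfies ψB_N^k = B_N^k and ‖B_N^k‖ ≤ C/((N-k)·ln²(N-k+e)) for a suitable constant C, and T is chosen large enough (depending only on C₀, M and the convolution constant), then B⁰_{N+1} satisfies ψ B⁰_{N+1} = B⁰_{N+1} and ‖B⁰_{N+1}‖ ≤ C/((N+1)·ln²(N+1+e)). -/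

import Mathlib

open Real Finset


noncomputable def gg (x : ℝ) : ℝ := x * (Real.log (x + Real.exp 1))^2

lemma log_one_le {x : ℝ} (hx : 0 ≤ x) : 1 ≤ Real.log (x + Real.exp 1) := by
  have h := Real.exp_one_gt_d9
  calc (1:ℝ) = Real.log (Real.exp 1) := by simp
    _ ≤ Real.log (x + Real.exp 1) := Real.log_le_log (Real.exp_pos 1) (by linarith)

lemma gg_pos {x : ℝ} (hx : 1 ≤ x) : 0 < gg x := by
  have h := log_one_le (by linarith : (0:ℝ) ≤ x)
  unfold gg; positivity

lemma scale_bound {s t c : ℝ} (hs : 1 ≤ s) (hst : s ≤ t) (h : c * s ≤ t + 1) :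
    c * gg s ≤ (t + 1) * (Real.log (t + Real.exp 1))^2 := by
  have h1 : 1 ≤ Real.log (s + Real.exp 1) := log_one_le (by linarith)
  have h2 : Real.log (s + Real.exp 1) ≤ Real.log (t + Real.exp 1) :=
    Real.log_le_log (by positivity) (by linarith)
  have h3 : (Real.log (s + Real.exp 1))^2 ≤ (Real.log (t + Real.exp 1))^2 := by nlinarith
  calc c * gg s = (c * s) * (Real.log (s + Real.exp 1))^2 := by unfold gg; ring
    _ ≤ (t + 1) * (Real.log (t + Real.exp 1))^2 :=
        mul_le_mul h h3 (by positivity) (by linarith)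

lemma eighth {s x : ℝ} (hs : 2 ≤ s) (hx : s ≤ 2*x) :
    s * (Real.log (s + Real.exp 1))^2 ≤ 8 * gg x := by
  have hx1 : 1 ≤ x := by linarith
  have he := Real.exp_one_gt_d9
  have hLx : 1 ≤ Real.log (x + Real.exp 1) := log_one_le (by linarith)
  have hLs0 : 0 ≤ Real.log (s + Real.exp 1) := le_trans zero_le_one (log_one_le (by linarith))
  have h1 : Real.log (s + Real.exp 1) ≤ 2 * Real.log (x + Real.exp 1) := by
    have hle : s + Real.exp 1 ≤ (x + Real.exp 1)^2 := by nlinarith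
    calc Real.log (s + Real.exp 1) ≤ Real.log ((x + Real.exp 1)^2) :=
          Real.log_le_log (by linarith) hle
      _ = 2 * Real.log (x + Real.exp 1) := by
          rw [Real.log_pow]; push_cast; ring
  have h2 : (Real.log (s + Real.exp 1))^2 ≤ 4 * (Real.log (x + Real.exp 1))^2 := by nlinarith
  unfold gg
  nlinarith [mul_le_mul hx h2 (sq_nonneg (Real.log (s + Real.exp 1))) (by linarith : (0:ℝ) ≤ 2*x)]

lemma sum_inv_gg (N : ℕ) : ∑ j ∈ range N, 1 / gg ((j:ℝ)+1) ≤ 10 := by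
  have he := Real.exp_one_gt_d9
  have he2 := Real.exp_one_lt_d9
  set F : ℕ → ℝ := fun j => 10 / Real.log ((j:ℝ) + 1 + Real.exp 1) with hF
  have key : ∀ j : ℕ, 1 / gg ((j:ℝ)+1) ≤ F j - F (j+1) := by
    intro j
    set x : ℝ := (j:ℝ) + 1 with hxdef
    have hx : 1 ≤ x := by rw [hxdef]; have := Nat.cast_nonneg (α:=ℝ) j; linarith
    set A := Real.log (x + Real.exp 1) with hA
    set B := Real.log (x + 1 + Real.exp 1) with hB
    have hA1 : 1 ≤ A := log_one_le (by linarith)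
    have hAB : A ≤ B := Real.log_le_log (by linarith) (by linarith)
    have hB2 : B ≤ 2 * A := by
      have hle : x + 1 + Real.exp 1 ≤ (x + Real.exp 1)^2 := by nlinarith
      calc B ≤ Real.log ((x + Real.exp 1)^2) := Real.log_le_log (by linarith) hle
        _ = 2 * A := by rw [hA, Real.log_pow]; push_cast; ring
    have hBA : 1 ≤ (B - A) * (x + 1 + Real.exp 1) := by
      have h0 : (0:ℝ) < x + Real.exp 1 := by linarith
      have h1 : (0:ℝ) < x + 1 + Real.exp 1 := by linarith
      have hlog : Real.log ((x + Real.exp 1)/(x + 1 + Real.exp 1)) ≤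
          (x + Real.exp 1)/(x + 1 + Real.exp 1) - 1 :=
        Real.log_le_sub_one_of_pos (by positivity)
      rw [Real.log_div (by linarith) (by linarith)] at hlog
      have : (1:ℝ)/(x + 1 + Real.exp 1) ≤ B - A := by
        have : (x + Real.exp 1)/(x + 1 + Real.exp 1) - 1 = -(1/(x + 1 + Real.exp 1)) := by
          field_simp; ring
        linarith [hlog, this.symm.le, this.le]
      calc (1:ℝ) = (1/(x + 1 + Real.exp 1)) * (x + 1 + Real.exp 1) := by field_simp
        _ ≤ (B - A) * (x + 1 + Real.exp 1) := by
            apply mul_le_mul_of_nonneg_right this (by linarith)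
    have hFj : F j = 10 / A := by simp [hF, hA, hxdef]
    have hFj1 : F (j+1) = 10 / B := by
      simp only [hF, hB, hxdef]; push_cast; ring_nf
    rw [hFj, hFj1]
    have hA0 : (0:ℝ) < A := by linarith
    have hB0 : (0:ℝ) < B := by linarith
    have hgg : gg x = x * A^2 := by rw [gg, hA]
    rw [hgg]
    have hdiff : 10 / A - 10 / B = 10 * (B - A) / (A * B) := by field_simp
    rw [hdiff, div_le_div_iff₀ (by positivity) (by positivity)]
    -- goal: 1 * (A * B) ≤ 10 * (B - A) * (x * A^2)
    have h5 : 1 ≤ (B - A) * (5 * x) := by nlinarith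
    nlinarith [mul_le_mul_of_nonneg_left h5 (by positivity : (0:ℝ) ≤ 2 * A^2), sq_nonneg A]
  calc ∑ j ∈ range N, 1 / gg ((j:ℝ)+1) ≤ ∑ j ∈ range N, (F j - F (j+1)) :=
        Finset.sum_le_sum (fun j _ => key j)
    _ = F 0 - F N := Finset.sum_range_sub' F N
    _ ≤ 10 := by
        have h0 : F 0 = 10 / Real.log (1 + Real.exp 1) := by simp [hF]
        have h1 : 1 ≤ Real.log (1 + Real.exp 1) := log_one_le (by norm_num)
        have h2 : 0 ≤ F N := by
          have := log_one_le (by positivity : (0:ℝ) ≤ (N:ℝ) + 1)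
          simp only [hF]; positivity
        have : F 0 ≤ 10 := by
          rw [h0]; rw [div_le_iff₀ (by linarith)]; nlinarith
        linarith

open Real Finset

lemma conv_bound (N : ℕ) (hN : 1 ≤ N) :
    ∑ k ∈ range N, 1 / (gg ((k:ℝ)+1) * gg ((N:ℝ)-k))
      ≤ 160 / gg ((N:ℝ)+1) := by
  have hN1 : (1:ℝ) ≤ (N:ℝ) := by exact_mod_cast hN
  have hG : 0 < gg ((N:ℝ)+1) := gg_pos (by linarith)
  set G := gg ((N:ℝ)+1) with hGdef
  have key : ∀ k ∈ range N, 1 / (gg ((k:ℝ)+1) * gg ((N:ℝ)-k))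
      ≤ (8 / G) * (1 / gg ((k:ℝ)+1) + 1 / gg ((N:ℝ)-k)) := by
    intro k hk
    have hkN : k < N := mem_range.mp hk
    have hkR : (k:ℝ) + 1 ≤ (N:ℝ) := by exact_mod_cast hkN
    have hk1 : (1:ℝ) ≤ (k:ℝ) + 1 := by have := Nat.cast_nonneg (α:=ℝ) k; linarith
    have hNk : (1:ℝ) ≤ (N:ℝ) - k := by linarith
    have ha : 0 < gg ((k:ℝ)+1) := gg_pos hk1
    have hb : 0 < gg ((N:ℝ)-k) := gg_pos hNk
    have hs : (2:ℝ) ≤ (N:ℝ) + 1 := by linarith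
    rcases le_or_gt ((N:ℝ)+1) (2*((k:ℝ)+1)) with hc | hc
    · -- G ≤ 8 * gg (k+1)
      have h8 : G ≤ 8 * gg ((k:ℝ)+1) := by
        have := eighth hs hc
        rw [hGdef]; unfold gg at this ⊢; linarith
      have h1 : 1 / gg ((k:ℝ)+1) ≤ 8 / G := by
        rw [div_le_div_iff₀ ha hG]; linarith
      calc 1 / (gg ((k:ℝ)+1) * gg ((N:ℝ)-k))
          = (1 / gg ((k:ℝ)+1)) * (1 / gg ((N:ℝ)-k)) := by rw [one_div, mul_inv]; ring
        _ ≤ (8 / G) * (1 / gg ((N:ℝ)-k)) :=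
            mul_le_mul_of_nonneg_right h1 (by positivity)
        _ ≤ (8 / G) * (1 / gg ((k:ℝ)+1) + 1 / gg ((N:ℝ)-k)) := by
            apply mul_le_mul_of_nonneg_left _ (by positivity)
            have : 0 ≤ 1 / gg ((k:ℝ)+1) := by positivity
            linarith
    · have hc' : (N:ℝ) + 1 ≤ 2 * ((N:ℝ) - k) := by linarith
      have h8 : G ≤ 8 * gg ((N:ℝ)-k) := by
        have := eighth hs hc'
        rw [hGdef]; unfold gg at this ⊢; linarith
      have h1 : 1 / gg ((N:ℝ)-k) ≤ 8 / G := by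
        rw [div_le_div_iff₀ hb hG]; linarith
      calc 1 / (gg ((k:ℝ)+1) * gg ((N:ℝ)-k))
          = (1 / gg ((N:ℝ)-k)) * (1 / gg ((k:ℝ)+1)) := by
            rw [one_div, mul_inv]; ring
        _ ≤ (8 / G) * (1 / gg ((k:ℝ)+1)) :=
            mul_le_mul_of_nonneg_right h1 (by positivity)
        _ ≤ (8 / G) * (1 / gg ((k:ℝ)+1) + 1 / gg ((N:ℝ)-k)) := by
            apply mul_le_mul_of_nonneg_left _ (by positivity)
            have : 0 ≤ 1 / gg ((N:ℝ)-k) := by positivity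
            linarith
  have hrefl : ∑ k ∈ range N, 1 / gg ((N:ℝ)-k) = ∑ j ∈ range N, 1 / gg ((j:ℝ)+1) := by
    rw [← Finset.sum_range_reflect (fun j => 1 / gg ((j:ℝ)+1)) N]
    apply Finset.sum_congr rfl
    intro k hk
    have hkN : k < N := mem_range.mp hk
    congr 2
    have h1 : N - 1 - k = N - (k+1) := by omega
    rw [h1, Nat.cast_sub (by omega : k + 1 ≤ N)]
    push_cast; ring
  calc ∑ k ∈ range N, 1 / (gg ((k:ℝ)+1) * gg ((N:ℝ)-k))
      ≤ ∑ k ∈ range N, (8 / G) * (1 / gg ((k:ℝ)+1) + 1 / gg ((N:ℝ)-k)) :=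
        Finset.sum_le_sum key
    _ = (8 / G) * ((∑ k ∈ range N, 1 / gg ((k:ℝ)+1)) + ∑ k ∈ range N, 1 / gg ((N:ℝ)-k)) := by
        rw [← Finset.mul_sum, Finset.sum_add_distrib]
    _ ≤ (8 / G) * (10 + 10) := by
        apply mul_le_mul_of_nonneg_left _ (by positivity)
        rw [hrefl]
        have := sum_inv_gg N
        linarith
    _ = 160 / G := by ring

/-- Inductive step of Lemma 5: for `T` large enough (depending only on the
constants `C₀, M, C` and on `T₁`), if each `B_N^k` satisfies `ψ B_N^k = B_N^k`
and `‖B_N^k‖ ≤ C/((N-k)·ln²(N-k+e))`, then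
`B⁰_{N+1} = ∑_{k<N} Sψ V(kT+T-T₁)ψ B_N^k + Sψ V(NT)ψ` satisfies
`ψ B⁰_{N+1} = B⁰_{N+1}` and `‖B⁰_{N+1}‖ ≤ C/((N+1)·ln²(N+1+e))`. -/
theorem inductive_step_lemma5
    {H : Type*} [NormedAddCommGroup H] [NormedSpace ℂ H] [CompleteSpace H]
    (C₀ M C T₁ : ℝ) (hC₀ : 0 < C₀) (hM : 0 < M) (hC : 0 < C) (hT₁ : 0 < T₁) :
    ∃ T₀ : ℝ, 2 ≤ T₀ ∧ T₁ < T₀ ∧ ∀ T : ℝ, T₀ ≤ T →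
      ∀ (V : ℝ → (H →L[ℂ] H)) (S ψ : H →L[ℂ] H),
        S = ψ * S → S = S * ψ → ‖S‖ ≤ M →
        (∀ t : ℝ, 0 ≤ t →
          ‖ψ * V t * ψ‖ ≤ C₀ / ((t + 1) * (Real.log (t + Real.exp 1)) ^ 2)) →
        ∀ (N : ℕ), 1 ≤ N → ∀ (B : ℕ → (H →L[ℂ] H)),
          (∀ k : ℕ, k < N → ψ * B k = B k) →
          (∀ k : ℕ, k < N →
            ‖B k‖ ≤ C / (((N : ℝ) - k) * (Real.log ((N : ℝ) - k + Real.exp 1)) ^ 2)) →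
          ψ * ((∑ k ∈ Finset.range N, S * ψ * V ((k : ℝ) * T + T - T₁) * ψ * B k) +
                S * ψ * V ((N : ℝ) * T) * ψ)
            = ((∑ k ∈ Finset.range N, S * ψ * V ((k : ℝ) * T + T - T₁) * ψ * B k) +
                S * ψ * V ((N : ℝ) * T) * ψ) ∧
          ‖(∑ k ∈ Finset.range N, S * ψ * V ((k : ℝ) * T + T - T₁) * ψ * B k) +
              S * ψ * V ((N : ℝ) * T) * ψ‖
            ≤ C / (((N : ℝ) + 1) * (Real.log ((N : ℝ) + 1 + Real.exp 1)) ^ 2) := by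
  refine ⟨max (max 2 (2*T₁)) (2*M*C₀*(160*C+1)/C), ?_, ?_, ?_⟩
  · exact le_max_of_le_left (le_max_left _ _)
  · exact lt_of_lt_of_le (by linarith) (le_max_of_le_left (le_max_right _ _))
  intro T hT V S ψ hψS hSψ hS hV N hN B hB1 hB2
  have hT2 : (2:ℝ) ≤ T := le_trans (le_max_of_le_left (le_max_left _ _)) hT
  have hTT₁ : 2*T₁ ≤ T := le_trans (le_max_of_le_left (le_max_right _ _)) hT
  have hTC : 2*M*C₀*(160*C+1)/C ≤ T := le_trans (le_max_right _ _) hT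
  have hT0 : (0:ℝ) < T := by linarith
  have hN1 : (1:ℝ) ≤ (N:ℝ) := by exact_mod_cast hN
  constructor
  · simp only [mul_add, Finset.mul_sum, ← mul_assoc, ← hψS]
  · have hG : 0 < gg ((N:ℝ)+1) := gg_pos (by linarith)
    have hGoal : C / (((N:ℝ)+1) * (Real.log ((N:ℝ)+1+Real.exp 1))^2) = C / gg ((N:ℝ)+1) := rfl
    rw [hGoal]
    have key : ∀ k ∈ range N, ‖S * ψ * V ((k:ℝ)*T+T-T₁) * ψ * B k‖
        ≤ (2*M*C₀*C/T) * (1/(gg ((k:ℝ)+1) * gg ((N:ℝ)-k))) := by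
      intro k hk
      have hkN : k < N := mem_range.mp hk
      have hk0 : (0:ℝ) ≤ (k:ℝ) := Nat.cast_nonneg k
      have hkR : (k:ℝ) + 1 ≤ (N:ℝ) := by exact_mod_cast hkN
      set t := (k:ℝ)*T+T-T₁ with ht
      have hkT : (0:ℝ) ≤ (k:ℝ)*T := by positivity
      have ht0 : (0:ℝ) ≤ t := by rw [ht]; linarith
      have hst : (k:ℝ)+1 ≤ t := by
        rw [ht]; nlinarith [mul_nonneg hk0 (by linarith : (0:ℝ) ≤ T - 1)]
      have hcs : (T/2) * ((k:ℝ)+1) ≤ t + 1 := by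
        rw [ht]; nlinarith [hkT]
      have hsb := scale_bound (s := (k:ℝ)+1) (t := t) (c := T/2) (by linarith) hst hcs
      have hVb := hV t ht0
      have hBb : ‖B k‖ ≤ C / gg ((N:ℝ)-k) := hB2 k hkN
      have hga : 0 < gg ((k:ℝ)+1) := gg_pos (by linarith)
      have hgb : 0 < gg ((N:ℝ)-k) := gg_pos (by linarith)
      have hDen : 0 < (t+1) * (Real.log (t+Real.exp 1))^2 :=
        lt_of_lt_of_le (by positivity) hsb
      have step1 : ‖S * ψ * V t * ψ * B k‖
          ≤ M * (C₀ / ((t+1) * (Real.log (t+Real.exp 1))^2)) * (C / gg ((N:ℝ)-k)) := by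
        have e1 : S * ψ * V t * ψ * B k = S * (ψ * V t * ψ) * B k := by
          rw [← mul_assoc, ← mul_assoc]
        rw [e1]
        calc ‖S * (ψ * V t * ψ) * B k‖ ≤ ‖S * (ψ * V t * ψ)‖ * ‖B k‖ := norm_mul_le _ _
          _ ≤ (‖S‖ * ‖ψ * V t * ψ‖) * ‖B k‖ :=
              mul_le_mul_of_nonneg_right (norm_mul_le _ _) (norm_nonneg _)
          _ ≤ (M * (C₀ / ((t+1) * (Real.log (t+Real.exp 1))^2))) * (C / gg ((N:ℝ)-k)) := by
              apply mul_le_mul _ hBb (norm_nonneg _)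
                (mul_nonneg hM.le (div_nonneg hC₀.le hDen.le))
              exact mul_le_mul hS hVb (norm_nonneg _) (by linarith)
      have step2 : C₀ / ((t+1) * (Real.log (t+Real.exp 1))^2)
          ≤ C₀ / ((T/2) * gg ((k:ℝ)+1)) :=
        div_le_div_of_nonneg_left hC₀.le (by positivity) hsb
      have heq : M * (C₀ / ((T/2) * gg ((k:ℝ)+1))) * (C / gg ((N:ℝ)-k))
          = (2*M*C₀*C/T) * (1/(gg ((k:ℝ)+1) * gg ((N:ℝ)-k))) := by
        field_simp
      calc ‖S * ψ * V t * ψ * B k‖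
          ≤ M * (C₀ / ((t+1) * (Real.log (t+Real.exp 1))^2)) * (C / gg ((N:ℝ)-k)) := step1
        _ ≤ M * (C₀ / ((T/2) * gg ((k:ℝ)+1))) * (C / gg ((N:ℝ)-k)) :=
            mul_le_mul_of_nonneg_right (mul_le_mul_of_nonneg_left step2 hM.le)
              (div_nonneg hC.le hgb.le)
        _ = (2*M*C₀*C/T) * (1/(gg ((k:ℝ)+1) * gg ((N:ℝ)-k))) := heq
    have hlast : ‖S * ψ * V ((N:ℝ)*T) * ψ‖ ≤ M * (2*C₀/T * (1 / gg ((N:ℝ)+1))) := by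
      have hNT0 : (0:ℝ) ≤ (N:ℝ)*T := by positivity
      have hVN := hV ((N:ℝ)*T) hNT0
      have h2N : 2*(N:ℝ) ≤ (N:ℝ)*T := by nlinarith
      have hst2 : (N:ℝ)+1 ≤ (N:ℝ)*T := by linarith
      have hcs2 : (T/2) * ((N:ℝ)+1) ≤ (N:ℝ)*T + 1 := by
        nlinarith [mul_nonneg hT0.le (by linarith : (0:ℝ) ≤ (N:ℝ)-1)]
      have hsb2 := scale_bound (s := (N:ℝ)+1) (t := (N:ℝ)*T) (c := T/2)
        (by linarith) hst2 hcs2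
      have hDen2 : 0 < ((N:ℝ)*T+1) * (Real.log ((N:ℝ)*T+Real.exp 1))^2 :=
        lt_of_lt_of_le (by positivity) hsb2
      have e2 : S * ψ * V ((N:ℝ)*T) * ψ = S * (ψ * V ((N:ℝ)*T) * ψ) := by
        rw [← mul_assoc, ← mul_assoc]
      rw [e2]
      have heq2 : C₀ / ((T/2) * gg ((N:ℝ)+1)) = 2*C₀/T * (1 / gg ((N:ℝ)+1)) := by
        simp only [div_eq_mul_inv, mul_inv, inv_inv, one_div]
        ring
      calc ‖S * (ψ * V ((N:ℝ)*T) * ψ)‖ ≤ ‖S‖ * ‖ψ * V ((N:ℝ)*T) * ψ‖ := norm_mul_le _ _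
        _ ≤ M * (C₀ / (((N:ℝ)*T+1) * (Real.log ((N:ℝ)*T+Real.exp 1))^2)) :=
            mul_le_mul hS hVN (norm_nonneg _) (by linarith)
        _ ≤ M * (C₀ / ((T/2) * gg ((N:ℝ)+1))) :=
            mul_le_mul_of_nonneg_left
              (div_le_div_of_nonneg_left hC₀.le (by positivity) hsb2) hM.le
        _ = M * (2*C₀/T * (1 / gg ((N:ℝ)+1))) := by rw [heq2]
    have hconv := conv_bound N hN
    have hfinal : (2*M*C₀*C/T) * (160 / gg ((N:ℝ)+1)) + M * (2*C₀/T * (1 / gg ((N:ℝ)+1)))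
        ≤ C / gg ((N:ℝ)+1) := by
      have hTCm : 2*M*C₀*(160*C+1) ≤ C*T := by
        rw [div_le_iff₀ hC] at hTC; linarith
      have hcomb : (2*M*C₀*C/T) * (160 / gg ((N:ℝ)+1)) + M * (2*C₀/T * (1 / gg ((N:ℝ)+1)))
          = (2*M*C₀*(160*C+1)/T) * (1 / gg ((N:ℝ)+1)) := by
        simp only [div_eq_mul_inv, mul_inv, inv_inv, one_div]
        ring
      rw [hcomb]
      have h1 : 2*M*C₀*(160*C+1)/T ≤ C := by
        rw [div_le_iff₀ hT0]; linarith
      calc (2*M*C₀*(160*C+1)/T) * (1 / gg ((N:ℝ)+1)) ≤ C * (1 / gg ((N:ℝ)+1)) :=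
            mul_le_mul_of_nonneg_right h1 (by positivity)
        _ = C / gg ((N:ℝ)+1) := by rw [mul_one_div]
    calc ‖(∑ k ∈ Finset.range N, S * ψ * V ((k : ℝ) * T + T - T₁) * ψ * B k) +
          S * ψ * V ((N : ℝ) * T) * ψ‖
        ≤ ‖∑ k ∈ Finset.range N, S * ψ * V ((k : ℝ) * T + T - T₁) * ψ * B k‖ +
          ‖S * ψ * V ((N : ℝ) * T) * ψ‖ := norm_add_le _ _
      _ ≤ (∑ k ∈ Finset.range N, ‖S * ψ * V ((k : ℝ) * T + T - T₁) * ψ * B k‖) +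
          ‖S * ψ * V ((N : ℝ) * T) * ψ‖ :=
            add_le_add_left (norm_sum_le _ _) _
      _ ≤ (∑ k ∈ Finset.range N, (2*M*C₀*C/T) * (1/(gg ((k:ℝ)+1) * gg ((N:ℝ)-k)))) +
          ‖S * ψ * V ((N : ℝ) * T) * ψ‖ :=
            add_le_add_left (Finset.sum_le_sum key) _
      _ = (2*M*C₀*C/T) * (∑ k ∈ Finset.range N, 1/(gg ((k:ℝ)+1) * gg ((N:ℝ)-k))) +
          ‖S * ψ * V ((N : ℝ) * T) * ψ‖ := by rw [Finset.mul_sum]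
      _ ≤ (2*M*C₀*C/T) * (160 / gg ((N:ℝ)+1)) + M * (2*C₀/T * (1 / gg ((N:ℝ)+1))) :=
            add_le_add (mul_le_mul_of_nonneg_left hconv (by positivity)) hlast
      _ ≤ C / gg ((N:ℝ)+1) := hfinal
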